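/- The newly inserted node has no outgoing reversed suffix link: when PPH(T[i..]) is updated to PPH(T[i−1..]) by inserting node v_{i−1} with id(v_{i−1}) = i−1, there is no node w in PPH(T[i−1..]) and character a such that rslink(a, v_{i−1}) = w. -/

import Mathlib

open List

variable {α : Type} [DecidableEq α]

/-- The previous encoding entry at (0-based) position `i` of a p-string `S`,
over static alphabet `Sig`. -/
def prevEncAt (Sig : Set α) [DecidablePred (· ∈ Sig)] (S : List α) (i : ℕ) : α ⊕ ℕ :=
  match S[i]? with
  | none => Sum.inr 0
  | some c =>
    if c ∈ Sig then Sum.inl c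
    else if (List.range i).any (fun j => decide (S[j]? = some c)) then
      Sum.inr (i - Nat.findGreatest (fun j => S[j]? = some c) (i - 1))
    else Sum.inr 0

/-- The previous encoding of a p-string `S`. -/
def prevEnc (Sig : Set α) [DecidablePred (· ∈ Sig)] (S : List α) : List (α ⊕ ℕ) :=
  (List.range S.length).map (prevEncAt Sig S)

/-- Two p-strings parameterized match: equal length and a bijection on characters
fixing the static alphabet pointwise maps one onto the other. -/
def PMatch (Sig : Set α) (X Y : List α) : Prop :=
  X.length = Y.length ∧ ∃ f : α ≃ α, (∀ a ∈ Sig, f a = a) ∧ X.map f = Y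

/-- Length of the shortest prefix of `S` not yet a node of `N`
(defaults to `S.length` if all prefixes are nodes). -/
def insLen {β : Type} [DecidableEq β] (N : Finset (List β)) (S : List β) : ℕ :=
  (((List.range (S.length + 1)).filter (fun m => decide (S.take m ∉ N))).head?).getD S.length

/-- The node set of the sequence hash tree of a sequence of strings,
built incrementally: each step inserts the shortest prefix of the current
string that is not yet a node. -/
def SHTNodes {β : Type} [DecidableEq β] (L : List (List β)) : Finset (List β) :=
  L.foldl (fun N S => insert (S.take (insLen N S)) N) ∅

/-- The sequence ⟨ε, prev(T[n..]), ..., prev(T[1..])⟩ of previous-encoded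
suffixes of `T` in increasing length order. -/
def pphSeq (Sig : Set α) [DecidablePred (· ∈ Sig)] (T : List α) : List (List (α ⊕ ℕ)) :=
  [] :: (List.range T.length).map (fun k => prevEnc Sig (T.drop (T.length - 1 - k)))

/-- The node set of the parameterized position heap `PPH(T)`. -/
def pphNodes (Sig : Set α) [DecidablePred (· ∈ Sig)] (T : List α) : Finset (List (α ⊕ ℕ)) :=
  SHTNodes (pphSeq Sig T)

/-- `a ∈ Σ ∪ {0}` as a character of a previous encoding. -/
def StaticOrZero (Sig : Set α) (a : α ⊕ ℕ) : Prop :=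
  (∃ c ∈ Sig, a = Sum.inl c) ∨ a = Sum.inr 0

/-- Reversed suffix link `rslink(a, v) = u` in a position heap with node set `N`
for a text of length `n`. -/
def RSLink (Sig : Set α) (n : ℕ) (N : Finset (List (α ⊕ ℕ)))
    (a : α ⊕ ℕ) (v u : List (α ⊕ ℕ)) : Prop :=
  v ∈ N ∧ u ∈ N ∧
    ((StaticOrZero Sig a ∧ u = a :: v) ∨
     (∃ d : ℕ, a = Sum.inr d ∧ 1 ≤ d ∧ d ≤ n - 1 ∧ v[d - 1]? = some (Sum.inr 0) ∧
       u = Sum.inr 0 :: (v.take (d - 1) ++ [Sum.inr d] ++ v.drop d)))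

lemma insLen_le {β : Type} [DecidableEq β] (N : Finset (List β)) (S : List β) :
    insLen N S ≤ S.length := by
  unfold insLen
  cases h : ((List.range (S.length + 1)).filter (fun m => decide (S.take m ∉ N))).head? with
  | none => simp
  | some m =>
    have hm : m ∈ (List.range (S.length + 1)).filter (fun m => decide (S.take m ∉ N)) :=
      List.mem_of_mem_head? (by rw [h]; simp)
    rw [List.mem_filter, List.mem_range] at hm
    simpa using Nat.lt_succ_iff.mp hm.1

lemma take_insLen_mem {β : Type} [DecidableEq β] (N : Finset (List β)) (S : List β) {m : ℕ}
    (hm : m < insLen N S) : S.take m ∈ N := by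
  by_contra hmem
  set F := (List.range (S.length + 1)).filter (fun m => decide (S.take m ∉ N)) with hF
  have hmF : m ∈ F := by
    rw [hF, List.mem_filter, List.mem_range]
    refine ⟨by have := insLen_le N S; omega, by simpa using hmem⟩
  have hne : F ≠ [] := fun h => by simp [h] at hmF
  obtain ⟨h0, t, hFc⟩ := List.exists_cons_of_ne_nil hne
  have hhead : insLen N S = h0 := by unfold insLen; rw [← hF, hFc]; rfl
  have hp : F.Pairwise (· < ·) := List.Pairwise.filter _ List.pairwise_lt_range
  rw [hFc] at hp hmF
  rcases List.mem_cons.mp hmF with rfl | hmt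
  · omega
  · have := (List.pairwise_cons.mp hp).1 m hmt; omega

lemma take_insLen_not_mem {β : Type} [DecidableEq β] (N : Finset (List β)) (S : List β)
    (hS : S ∉ N) : S.take (insLen N S) ∉ N := by
  set F := (List.range (S.length + 1)).filter (fun m => decide (S.take m ∉ N)) with hF
  have hlenF : S.length ∈ F := by
    rw [hF, List.mem_filter, List.mem_range]
    exact ⟨Nat.lt_succ_self _, by simpa [List.take_length] using hS⟩
  have hne : F ≠ [] := fun h => by simp [h] at hlenF
  obtain ⟨h0, t, hFc⟩ := List.exists_cons_of_ne_nil hne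
  have hhead : insLen N S = h0 := by unfold insLen; rw [← hF, hFc]; rfl
  have hh0 : h0 ∈ F := by rw [hFc]; exact List.mem_cons_self
  rw [hF, List.mem_filter] at hh0
  rw [hhead]
  simpa using hh0.2

lemma prevEnc_length (Sig : Set α) [DecidablePred (· ∈ Sig)] (S : List α) :
    (prevEnc Sig S).length = S.length := by simp [prevEnc]

lemma pphNodes_drop_ge (Sig : Set α) [DecidablePred (· ∈ Sig)] (T : List α) (i : ℕ)
    (h : T.length ≤ i) : pphNodes Sig (T.drop i) = {[]} := by
  rw [List.drop_eq_nil_of_le h]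
  unfold pphNodes pphSeq SHTNodes
  simp

lemma pphSeq_succ (Sig : Set α) [DecidablePred (· ∈ Sig)] (T : List α) (i : ℕ)
    (h : i < T.length) :
    pphSeq Sig (T.drop i) = pphSeq Sig (T.drop (i+1)) ++ [prevEnc Sig (T.drop i)] := by
  obtain ⟨m, hm⟩ : ∃ m, T.length = i + 1 + m := ⟨T.length - (i+1), by omega⟩
  unfold pphSeq
  simp only [List.length_drop, List.drop_drop, hm]
  have h3 : i + 1 + m - i = m + 1 := by omega
  have h4 : i + 1 + m - (i + 1) = m := by omega
  rw [h3, h4, List.range_succ, List.map_append, List.cons_append]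
  congr 1
  congr 1
  · apply List.map_congr_left
    intro k hk
    rw [List.mem_range] at hk
    congr 2
    omega
  · simp only [List.map_cons, List.map_nil]
    congr 3
    omega

lemma pphNodes_succ (Sig : Set α) [DecidablePred (· ∈ Sig)] (T : List α) (i : ℕ)
    (h : i < T.length) :
    pphNodes Sig (T.drop i) =
      insert ((prevEnc Sig (T.drop i)).take
          (insLen (pphNodes Sig (T.drop (i+1))) (prevEnc Sig (T.drop i))))
        (pphNodes Sig (T.drop (i+1))) := by
  unfold pphNodes SHTNodes
  rw [pphSeq_succ Sig T i h, List.foldl_append]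
  rfl

lemma nil_mem_pph (Sig : Set α) [DecidablePred (· ∈ Sig)] (T : List α) (i : ℕ) :
    [] ∈ pphNodes Sig (T.drop i) := by
  by_cases h : i < T.length
  · rw [pphNodes_succ Sig T i h]
    exact Finset.mem_insert_of_mem (nil_mem_pph Sig T (i+1))
  · rw [pphNodes_drop_ge Sig T i (by omega)]; simp
termination_by T.length - i
decreasing_by omega

lemma pph_mono (Sig : Set α) [DecidablePred (· ∈ Sig)] (T : List α) {i j : ℕ} (hij : j ≤ i) :
    pphNodes Sig (T.drop i) ⊆ pphNodes Sig (T.drop j) := by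
  rcases eq_or_lt_of_le hij with rfl | hlt
  · exact Finset.Subset.refl _
  · by_cases h : j < T.length
    · rw [pphNodes_succ Sig T j h]
      exact (pph_mono Sig T (show j+1 ≤ i from hlt)).trans (Finset.subset_insert _ _)
    · rw [pphNodes_drop_ge Sig T i (by omega), pphNodes_drop_ge Sig T j (by omega)]
termination_by i - j
decreasing_by omega

lemma take_mem_pph (Sig : Set α) [DecidablePred (· ∈ Sig)] (T : List α) (i : ℕ)
    {w : List (α ⊕ ℕ)} (hw : w ∈ pphNodes Sig (T.drop i)) (m : ℕ) :
    w.take m ∈ pphNodes Sig (T.drop i) := by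
  by_cases h : i < T.length
  · rw [pphNodes_succ Sig T i h] at hw ⊢
    rcases Finset.mem_insert.mp hw with rfl | hw'
    · rw [List.take_take]
      by_cases hm : insLen (pphNodes Sig (T.drop (i+1))) (prevEnc Sig (T.drop i)) ≤ m
      · rw [min_eq_right hm]; exact Finset.mem_insert_self _ _
      · push_neg at hm
        rw [min_eq_left (le_of_lt hm)]
        exact Finset.mem_insert_of_mem (take_insLen_mem _ _ hm)
    · exact Finset.mem_insert_of_mem (take_mem_pph Sig T (i+1) hw' m)
  · rw [pphNodes_drop_ge Sig T i (by omega)] at hw ⊢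
    simp only [Finset.mem_singleton] at hw
    simp [hw]
termination_by T.length - i
decreasing_by omega

lemma len_le_pph (Sig : Set α) [DecidablePred (· ∈ Sig)] (T : List α) (i : ℕ)
    {w : List (α ⊕ ℕ)} (hw : w ∈ pphNodes Sig (T.drop i)) : w.length ≤ T.length - i := by
  by_cases h : i < T.length
  · rw [pphNodes_succ Sig T i h] at hw
    rcases Finset.mem_insert.mp hw with rfl | hw'
    · have h1 : ((prevEnc Sig (T.drop i)).take
          (insLen (pphNodes Sig (T.drop (i+1))) (prevEnc Sig (T.drop i)))).length ≤
          (prevEnc Sig (T.drop i)).length := by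
        rw [List.length_take]; exact min_le_right _ _
      rw [prevEnc_length, List.length_drop] at h1
      exact h1
    · have := len_le_pph Sig T (i+1) hw'; omega
  · rw [pphNodes_drop_ge Sig T i (by omega)] at hw
    simp only [Finset.mem_singleton] at hw
    simp [hw]
termination_by T.length - i
decreasing_by omega

lemma pph_decomp (Sig : Set α) [DecidablePred (· ∈ Sig)] (T : List α) (i : ℕ)
    {w : List (α ⊕ ℕ)} (hw : w ∈ pphNodes Sig (T.drop i)) :
    w = [] ∨ ∃ i', i ≤ i' ∧ i' < T.length ∧ w ∉ pphNodes Sig (T.drop (i'+1)) ∧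
      w = (prevEnc Sig (T.drop i')).take
        (insLen (pphNodes Sig (T.drop (i'+1))) (prevEnc Sig (T.drop i'))) := by
  by_cases h : i < T.length
  · rw [pphNodes_succ Sig T i h] at hw
    rcases Finset.mem_insert.mp hw with heq | hw'
    · by_cases hw2 : w ∈ pphNodes Sig (T.drop (i+1))
      · rcases pph_decomp Sig T (i+1) hw2 with h0 | ⟨i', h1, h2, h3, h4⟩
        · exact Or.inl h0
        · exact Or.inr ⟨i', by omega, h2, h3, h4⟩
      · exact Or.inr ⟨i, le_refl _, h, hw2, heq⟩
    · rcases pph_decomp Sig T (i+1) hw' with h0 | ⟨i', h1, h2, h3, h4⟩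
      · exact Or.inl h0
      · exact Or.inr ⟨i', by omega, h2, h3, h4⟩
  · rw [pphNodes_drop_ge Sig T i (by omega)] at hw
    simpa using Or.inl (Finset.mem_singleton.mp hw)
termination_by T.length - i
decreasing_by all_goals omega

lemma prevEnc_getElem? (Sig : Set α) [DecidablePred (· ∈ Sig)] (S : List α) (k : ℕ)
    (hk : k < S.length) : (prevEnc Sig S)[k]? = some (prevEncAt Sig S k) := by
  unfold prevEnc
  rw [List.getElem?_map, List.getElem?_range hk]
  rfl

lemma prevEncAt_inr_le (Sig : Set α) [DecidablePred (· ∈ Sig)] (S : List α) (k d : ℕ)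
    (h : prevEncAt Sig S k = Sum.inr d) : d ≤ k := by
  unfold prevEncAt at h
  split at h
  · have := Sum.inr.inj h; omega
  · split at h
    · exact absurd h (by simp)
    · split at h
      · have := Sum.inr.inj h; omega
      · have := Sum.inr.inj h; omega

def pshiftF (w : List (α ⊕ ℕ)) (k : ℕ) : α ⊕ ℕ :=
  match w[k+1]? with
  | some (Sum.inl c) => Sum.inl c
  | some (Sum.inr d) => if d = k + 1 then Sum.inr 0 else Sum.inr d
  | none => Sum.inr 0

def pshift (w : List (α ⊕ ℕ)) : List (α ⊕ ℕ) := (List.range (w.length - 1)).map (pshiftF w)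

lemma pshiftF_of_bounded (w : List (α ⊕ ℕ)) (k : ℕ) (x : α ⊕ ℕ) (hx : w[k+1]? = some x)
    (hb : ∀ e, x = Sum.inr e → e ≤ k) : pshiftF w k = x := by
  unfold pshiftF
  rw [hx]
  rcases x with c | e
  · rfl
  · have he : e ≤ k := hb e rfl
    show (if e = k + 1 then (Sum.inr 0 : α ⊕ ℕ) else Sum.inr e) = Sum.inr e
    rw [if_neg (show ¬ e = k + 1 by omega)]

lemma pshift_cons (a : α ⊕ ℕ) (v : List (α ⊕ ℕ))
    (hv : ∀ (k d : ℕ), v[k]? = some (Sum.inr d) → d ≤ k) : pshift (a :: v) = v := by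
  unfold pshift
  have hlen : (a :: v).length - 1 = v.length := by simp
  rw [hlen]
  apply List.ext_getElem (by simp)
  intro k h1 h2
  simp only [List.getElem_map, List.getElem_range]
  apply pshiftF_of_bounded
  · show (a :: v)[k+1]? = some v[k]
    simp [List.getElem?_eq_getElem h2]
  · intro e he
    exact hv k e (by rw [List.getElem?_eq_getElem h2, he])

lemma pshiftF_eq_ite (w : List (α ⊕ ℕ)) (k : ℕ) (x : α ⊕ ℕ) (hx : w[k+1]? = some x) :
    pshiftF w k = if x = Sum.inr (k+1) then Sum.inr 0 else x := by
  unfold pshiftF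
  rw [hx]
  rcases x with c | e
  · show (Sum.inl c : α ⊕ ℕ) = _
    rw [if_neg (by simp)]
  · show (if e = k + 1 then (Sum.inr 0 : α ⊕ ℕ) else Sum.inr e) = _
    by_cases he : e = k + 1
    · rw [if_pos he, if_pos (by rw [he])]
    · rw [if_neg he, if_neg (by simp [he])]

lemma prevEncAt_eq_of_getElem (Sig : Set α) [DecidablePred (· ∈ Sig)] (S : List α) (i : ℕ)
    (c : α) (h : S[i]? = some c) :
    prevEncAt Sig S i =
      if c ∈ Sig then Sum.inl c
      else if (List.range i).any (fun j => decide (S[j]? = some c)) then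
        Sum.inr (i - Nat.findGreatest (fun j => S[j]? = some c) (i - 1))
      else Sum.inr 0 := by
  unfold prevEncAt
  rw [h]

lemma prevEncAt_tail (Sig : Set α) [DecidablePred (· ∈ Sig)] (S : List α) (k : ℕ)
    (hk : k + 1 < S.length) :
    prevEncAt Sig S.tail k =
      if prevEncAt Sig S (k+1) = Sum.inr (k+1) then Sum.inr 0 else prevEncAt Sig S (k+1) := by
  rcases S with _ | ⟨s, S'⟩
  · simp at hk
  · simp only [List.tail_cons]
    simp only [List.length_cons] at hk
    have hk' : k < S'.length := by omega
    have hc : S'[k]? = some S'[k] := List.getElem?_eq_getElem hk'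
    have hc2 : (s :: S')[k+1]? = some S'[k] := by simpa using hc
    set c := S'[k] with hcdef
    rw [prevEncAt_eq_of_getElem Sig S' k c hc, prevEncAt_eq_of_getElem Sig (s :: S') (k+1) c hc2]
    have hconv : ∀ (L : List α) (i : ℕ),
        (((List.range i).any fun j => decide (L[j]? = some c)) = true) ↔
          ∃ j < i, L[j]? = some c := by
      intro L i
      simp [List.any_eq_true, List.mem_range]
    by_cases hcS : c ∈ Sig
    · rw [if_pos hcS, if_pos hcS, if_neg (by simp)]
    · rw [if_neg hcS, if_neg hcS]
      simp only [Nat.add_sub_cancel]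
      by_cases hSc : ∃ j < k + 1, (s :: S')[j]? = some c
      · by_cases hS' : ∃ j < k, S'[j]? = some c
        · -- case A : previous occurrence not at position 0
          rw [if_pos ((hconv S' k).mpr hS'), if_pos ((hconv (s::S') (k+1)).mpr hSc)]
          obtain ⟨j0, hj0k, hj0⟩ := hS'
          have hP0 : (s :: S')[j0 + 1]? = some c := by simpa using hj0
          have hJ1 : j0 + 1 ≤ Nat.findGreatest (fun j => (s :: S')[j]? = some c) k :=
            Nat.le_findGreatest (P := fun j => (s :: S')[j]? = some c) (n := k) (by omega) hP0
          have hJle : Nat.findGreatest (fun j => (s :: S')[j]? = some c) k ≤ k :=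
            Nat.findGreatest_le k
          have hJspec : (s :: S')[Nat.findGreatest (fun j => (s :: S')[j]? = some c) k]? = some c :=
            Nat.findGreatest_spec (P := fun j => (s :: S')[j]? = some c) (n := k) (m := j0 + 1) (by omega) hP0
          set J := Nat.findGreatest (fun j => (s :: S')[j]? = some c) k with hJ
          have hJpos : 1 ≤ J := by omega
          have hJ1' : S'[J - 1]? = some c := by
            have h5 : J - 1 + 1 = J := by omega
            rw [← h5] at hJspec
            simpa using hJspec
          have hle1 : J - 1 ≤ Nat.findGreatest (fun j => S'[j]? = some c) (k - 1) :=
            Nat.le_findGreatest (P := fun j => S'[j]? = some c) (n := k - 1) (by omega) hJ1'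
          have hle2 : Nat.findGreatest (fun j => S'[j]? = some c) (k - 1) ≤ k - 1 :=
            Nat.findGreatest_le (k - 1)
          have hJ'spec : S'[Nat.findGreatest (fun j => S'[j]? = some c) (k - 1)]? = some c :=
            Nat.findGreatest_spec (P := fun j => S'[j]? = some c) (n := k - 1) (m := j0) (by omega) hj0
          set J' := Nat.findGreatest (fun j => S'[j]? = some c) (k - 1) with hJ'
          have hP'1 : (s :: S')[J' + 1]? = some c := by simpa using hJ'spec
          have hle3 : J' + 1 ≤ J := Nat.le_findGreatest (P := fun j => (s :: S')[j]? = some c) (n := k) (by omega) hP'1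
          rw [if_neg (by simp only [Sum.inr.injEq]; omega)]
          congr 1
          omega
        · -- case B : only occurrence is at position 0
          rw [if_neg (by simpa using (hconv S' k).not.mpr (by simpa using hS')),
            if_pos ((hconv (s::S') (k+1)).mpr hSc)]
          have hJ0 : Nat.findGreatest (fun j => (s :: S')[j]? = some c) k = 0 := by
            by_contra hne
            have hpos : 1 ≤ Nat.findGreatest (fun j => (s :: S')[j]? = some c) k := by omega
            obtain ⟨j1, hj1k, hj1⟩ := hSc
            have hJspec : (s :: S')[Nat.findGreatest (fun j => (s :: S')[j]? = some c) k]? = some c :=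
              Nat.findGreatest_spec (P := fun j => (s :: S')[j]? = some c) (n := k) (m := j1) (by omega) hj1
            have hJle : Nat.findGreatest (fun j => (s :: S')[j]? = some c) k ≤ k :=
              Nat.findGreatest_le k
            set J := Nat.findGreatest (fun j => (s :: S')[j]? = some c) k with hJ
            have h5 : J - 1 + 1 = J := by omega
            rw [← h5] at hJspec
            exact hS' ⟨J - 1, by omega, by simpa using hJspec⟩
          rw [hJ0]
          simp
      · -- case C : no previous occurrence at all
        have hS' : ¬ ∃ j < k, S'[j]? = some c := by
          rintro ⟨j, hj, hjc⟩
          exact hSc ⟨j + 1, by omega, by simpa using hjc⟩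
        have h1 : ¬ (((List.range k).any fun j => decide (S'[j]? = some c)) = true) := by
          simpa using (hconv S' k).not.mpr (by simpa using hS')
        have h2 : ¬ (((List.range (k+1)).any fun j => decide ((s :: S')[j]? = some c)) = true) := by
          simpa using (hconv (s :: S') (k+1)).not.mpr (by simpa using hSc)
        rw [if_neg h1]
        rw [if_neg h2]
        simp

lemma pshift_take_prevEnc (Sig : Set α) [DecidablePred (· ∈ Sig)] (S : List α) (m : ℕ)
    (hm : m ≤ S.length) :
    pshift ((prevEnc Sig S).take m) = (prevEnc Sig S.tail).take (m - 1) := by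
  rcases Nat.eq_zero_or_pos m with rfl | hpos
  · simp [pshift]
  · have hlen : ((prevEnc Sig S).take m).length = m := by
      rw [List.length_take, prevEnc_length]; omega
    unfold pshift
    rw [hlen]
    have h2 : (prevEnc Sig S.tail).take (m - 1) =
        (List.range (m - 1)).map (prevEncAt Sig S.tail) := by
      unfold prevEnc
      rw [← List.map_take, List.take_range,
        min_eq_left (by rw [List.length_tail]; omega)]
    rw [h2]
    apply List.map_congr_left
    intro k hk
    rw [List.mem_range] at hk
    have hk1 : k + 1 < m := by omega
    have hkS : k + 1 < S.length := by omega
    have hget : ((prevEnc Sig S).take m)[k+1]? = some (prevEncAt Sig S (k+1)) := by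
      rw [List.getElem?_take, if_pos hk1, prevEnc_getElem? Sig S (k+1) hkS]
    rw [pshiftF_eq_ite _ _ _ hget]
    exact (prevEncAt_tail Sig S k hkS).symm

lemma prevEnc_take_bounded (Sig : Set α) [DecidablePred (· ∈ Sig)] (S : List α) (m : ℕ) :
    ∀ (k e : ℕ), ((prevEnc Sig S).take m)[k]? = some (Sum.inr e) → e ≤ k := by
  intro k e h
  have hk : k < S.length := by
    by_contra hk'
    have hle : ((prevEnc Sig S).take m).length ≤ k := by
      rw [List.length_take, prevEnc_length]; omega
    rw [List.getElem?_eq_none hle] at h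
    cases h
  rw [List.getElem?_take] at h
  by_cases hkm : k < m
  · rw [if_pos hkm, prevEnc_getElem? Sig S k hk] at h
    exact prevEncAt_inr_le Sig S k e (Option.some.inj h)
  · rw [if_neg hkm] at h
    cases h

lemma pshift_case2 (v : List (α ⊕ ℕ)) (d : ℕ) (hd : 1 ≤ d) (hdl : d - 1 < v.length)
    (h0 : v[d-1]? = some (Sum.inr 0))
    (hv : ∀ (k e : ℕ), v[k]? = some (Sum.inr e) → e ≤ k) :
    pshift (Sum.inr 0 :: (v.take (d-1) ++ [Sum.inr d] ++ v.drop d)) = v := by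
  have hset : v.take (d-1) ++ [Sum.inr d] ++ v.drop d = v.set (d-1) (Sum.inr d) := by
    rw [List.set_eq_take_append_cons_drop, if_pos hdl]
    have h5 : d - 1 + 1 = d := by omega
    rw [h5, List.append_assoc, List.singleton_append]
  rw [hset]
  unfold pshift
  have hlen : (Sum.inr 0 :: v.set (d-1) (Sum.inr d) : List (α ⊕ ℕ)).length - 1 = v.length := by
    simp
  rw [hlen]
  apply List.ext_getElem (by simp)
  intro k h1 h2
  simp only [List.getElem_map, List.getElem_range]
  have hcons : ∀ (x : α ⊕ ℕ), (v.set (d-1) (Sum.inr d))[k]? = some x →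
      (Sum.inr 0 :: v.set (d-1) (Sum.inr d) : List (α ⊕ ℕ))[k+1]? = some x := by
    intro x hx; simpa using hx
  by_cases hk : k = d - 1
  · subst hk
    have hxs : (v.set (d-1) (Sum.inr d))[d-1]? = some (Sum.inr d) :=
      List.getElem?_set_self hdl
    rw [pshiftF_eq_ite _ _ _ (hcons _ hxs), if_pos (by rw [show d - 1 + 1 = d from by omega])]
    have hvd : v[d-1]? = some v[d-1] := List.getElem?_eq_getElem h2
    rw [hvd] at h0
    exact (Option.some.inj h0).symm
  · have hvk : v[k]? = some v[k] := List.getElem?_eq_getElem h2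
    have hxs : (v.set (d-1) (Sum.inr d))[k]? = some v[k] := by
      rw [List.getElem?_set_ne (fun h => hk h.symm), hvk]
    exact pshiftF_of_bounded _ _ _ (hcons _ hxs) (fun e he => hv k e (by rw [hvk, he]))

lemma depth_lemma (Sig : Set α) [DecidablePred (· ∈ Sig)] (T : List α) (i : ℕ)
    (hi : i < T.length) :
    (prevEnc Sig (T.drop (i+1))).take
        (insLen (pphNodes Sig (T.drop (i+1))) (prevEnc Sig (T.drop i)) - 1) ∈
      pphNodes Sig (T.drop (i+1)) := by
  set ℓ := insLen (pphNodes Sig (T.drop (i+1))) (prevEnc Sig (T.drop i)) with hℓ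
  have hℓlen : ℓ ≤ T.length - i := by
    have := insLen_le (pphNodes Sig (T.drop (i+1))) (prevEnc Sig (T.drop i))
    rwa [prevEnc_length, List.length_drop] at this
  by_cases h2 : ℓ ≤ 1
  · rw [show ℓ - 1 = 0 from by omega, List.take_zero]
    exact nil_mem_pph Sig T (i+1)
  · push_neg at h2
    have hi1 : i + 1 < T.length := by omega
    set ℓ' := insLen (pphNodes Sig (T.drop (i+2))) (prevEnc Sig (T.drop (i+1))) with hℓ'
    by_cases hle : ℓ - 1 ≤ ℓ'
    · have hu : (prevEnc Sig (T.drop (i+1))).take ℓ' ∈ pphNodes Sig (T.drop (i+1)) := by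
        rw [pphNodes_succ Sig T (i+1) hi1]
        exact Finset.mem_insert_self _ _
      have := take_mem_pph Sig T (i+1) hu (ℓ - 1)
      rwa [List.take_take, min_eq_left hle] at this
    · push_neg at hle
      have hxmem : (prevEnc Sig (T.drop i)).take (ℓ' + 1) ∈ pphNodes Sig (T.drop (i+1)) :=
        take_insLen_mem _ _ (by omega)
      have hxlen : ((prevEnc Sig (T.drop i)).take (ℓ' + 1)).length = ℓ' + 1 := by
        rw [List.length_take, prevEnc_length, List.length_drop]; omega
      rcases pph_decomp Sig T (i+1) hxmem with h0 | ⟨i'', hgei, hlt, hnm, heq⟩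
      · have := congrArg List.length h0
        rw [hxlen] at this
        simp at this
      · set ℓ'' := insLen (pphNodes Sig (T.drop (i''+1))) (prevEnc Sig (T.drop i'')) with hℓ''
        have hℓ''le : ℓ'' ≤ (prevEnc Sig (T.drop i'')).length := insLen_le _ _
        have hlen'' : ℓ'' = ℓ' + 1 := by
          have h3 := congrArg List.length heq
          rw [hxlen, List.length_take] at h3
          omega
        have hne : i'' ≠ i + 1 := by
          intro h
          rw [h] at hℓ''
          rw [hℓ'' ] at hlen''
          rw [show i + 1 + 1 = i + 2 from rfl] at hlen''
          omega
        have hgt : i + 1 < i'' := by omega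
        have hs1 : pshift ((prevEnc Sig (T.drop i)).take (ℓ' + 1)) =
            (prevEnc Sig (T.drop (i+1))).take ℓ' := by
          rw [pshift_take_prevEnc Sig (T.drop i) (ℓ' + 1)
            (by rw [List.length_drop]; omega), List.tail_drop]
          simp
        have hs2 : pshift ((prevEnc Sig (T.drop i)).take (ℓ' + 1)) =
            (prevEnc Sig (T.drop (i''+1))).take ℓ' := by
          rw [heq, pshift_take_prevEnc Sig (T.drop i'') ℓ''
            (by rw [← prevEnc_length Sig (T.drop i'')]; exact hℓ''le),
            List.tail_drop, hlen'']
          simp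
        have hdep := depth_lemma Sig T i'' hlt
        rw [← hℓ'', hlen''] at hdep
        rw [show ℓ' + 1 - 1 = ℓ' from by omega] at hdep
        rw [← hs2, hs1] at hdep
        have hmono := pph_mono Sig T (show i + 2 ≤ i'' + 1 by omega) hdep
        have hP1nm : prevEnc Sig (T.drop (i+1)) ∉ pphNodes Sig (T.drop (i+2)) := by
          intro hmem
          have := len_le_pph Sig T (i+2) hmem
          rw [prevEnc_length, List.length_drop] at this
          omega
        exact absurd hmono (hℓ' ▸ take_insLen_not_mem _ _ hP1nm)
termination_by T.length - i
decreasing_by omega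

theorem stmt18 (Sig : Set α) [DecidablePred (· ∈ Sig)] (T : List α)
    (j : ℕ) (hj : j + 1 ≤ T.length) (v : List (α ⊕ ℕ))
    (hvnew : v ∈ pphNodes Sig (T.drop j)) (hvold : v ∉ pphNodes Sig (T.drop (j + 1))) :
    ∀ a w, ¬ RSLink Sig (T.drop j).length (pphNodes Sig (T.drop j)) a v w := by
  intro a w hRS
  obtain ⟨hvN, hwN, hcase⟩ := hRS
  have hvb : ∀ (k e : ℕ), v[k]? = some (Sum.inr e) → e ≤ k := by
    rcases pph_decomp Sig T j hvnew with rfl | ⟨i0, _, _, _, hveq⟩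
    · intro k e h; simp at h
    · intro k e h; rw [hveq] at h
      exact prevEnc_take_bounded Sig (T.drop i0) _ k e h
  have hsw : pshift w = v := by
    rcases hcase with ⟨hsz, hw⟩ | ⟨d, ha, hd1, hdn, h0, hw⟩
    · rw [hw]; exact pshift_cons a v hvb
    · have hdl : d - 1 < v.length := by
        by_contra hcon
        rw [List.getElem?_eq_none (by omega)] at h0
        cases h0
      rw [hw]; exact pshift_case2 v d hd1 hdl h0 hvb
  have hwne : w ≠ [] := by
    rcases hcase with ⟨_, hw⟩ | ⟨d, _, _, _, _, hw⟩ <;> simp [hw]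
  rcases pph_decomp Sig T j hwN with h0 | ⟨i', hji, hiltn, hnm, hweq⟩
  · exact hwne h0
  · have hℓle : insLen (pphNodes Sig (T.drop (i'+1))) (prevEnc Sig (T.drop i')) ≤
        (T.drop i').length := by
      have := insLen_le (pphNodes Sig (T.drop (i'+1))) (prevEnc Sig (T.drop i'))
      rwa [prevEnc_length] at this
    have hs : pshift w = (prevEnc Sig (T.drop (i'+1))).take
        (insLen (pphNodes Sig (T.drop (i'+1))) (prevEnc Sig (T.drop i')) - 1) := by
      rw [hweq, pshift_take_prevEnc Sig (T.drop i') _ hℓle, List.tail_drop]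
    have hdep := depth_lemma Sig T i' hiltn
    rw [← hs, hsw] at hdep
    exact hvold (pph_mono Sig T (show j + 1 ≤ i' + 1 by omega) hdep)
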